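/- For integers 0 < k < ℓ and every rational number d with 0 ≤ d ≤ (ℓ−k)/ℓ, there exist arbitrarily long words W over a two-letter alphabet {a,b} such that d(a^k, W) = d and d(a^ℓ, W) = 0; that is, for every N there exists such a word W with |W| ≥ N. -/

import Mathlib

open Filter

/-- `U` is an instance of `V`: image of `V` under a nonerasing substitution. -/
def IsInstance {Γ β : Type*} (V : List Γ) (U : List β) : Prop :=
  ∃ φ : Γ → List β, (∀ x ∈ V, φ x ≠ []) ∧ U = (V.map φ).flatten

/-- `W` encounters `V`: some factor of `W` is an instance of `V`. -/
def Encounters {Γ β : Type*} (V : List Γ) (W : List β) : Prop :=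
  ∃ U : List β, U <:+: W ∧ IsInstance V U

/-- Zimin words over alphabet ℕ. -/
def Zimin : ℕ → List ℕ
  | 0 => []
  | n + 1 => Zimin n ++ [n] ++ Zimin n

/-- Least M such that every q-ary word of length M encounters Z_n. -/
noncomputable def fZ (n q : ℕ) : ℕ :=
  sInf {M | ∀ W : List (Fin q), W.length = M → Encounters (Zimin n) W}

/-- Exponential tower with b copies of a. -/
def tower (a : ℕ) : ℕ → ℕ
  | 0 => 1
  | b + 1 => a ^ tower a b

/-- Number of length-M q-ary words that are instances of V. -/
noncomputable def instCount (V : List ℕ) (q M : ℕ) : ℕ :=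
  Nat.card {W : Fin M → Fin q // IsInstance V (List.ofFn W)}

/-- Factor density d(V,W). -/
noncomputable def factorDensity {α : Type*} [DecidableEq α] (V W : List α) : ℝ :=
  (((((Finset.range (W.length + 1)) ×ˢ (Finset.range (W.length + 1))).filter
      (fun p => p.1 < p.2 ∧ (W.drop p.1).take (p.2 - p.1) = V)).card : ℝ)) /
    ((W.length : ℝ) + 1 - (V.length : ℝ))

/-- Number of substrings of W (given by position pairs) that are V-instances. -/
noncomputable def instSubCount {Γ β : Type*} (V : List Γ) (W : List β) : ℕ :=
  Nat.card {p : ℕ × ℕ //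
    p.1 < p.2 ∧ p.2 ≤ W.length ∧ IsInstance V ((W.drop p.1).take (p.2 - p.1))}

/-- Instance density δ(V,W). -/
noncomputable def instDensity {Γ β : Type*} (V : List Γ) (W : List β) : ℝ :=
  (instSubCount V W : ℝ) / ((W.length + 1).choose 2 : ℝ)

/-- q-liminf density of V. -/
noncomputable def liminfDensity {Γ : Type*} (V : List Γ) (q : ℕ) : ℝ :=
  Filter.liminf (fun W : List (Fin q) => instDensity V W) (Filter.comap List.length Filter.atTop)

/-- Expected instance density of V in a uniformly random q-ary word of length n. -/
noncomputable def expDensity {Γ : Type*} (V : List Γ) (q n : ℕ) : ℝ :=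
  (∑ W : Fin n → Fin q, instDensity V (List.ofFn W)) / (q : ℝ) ^ n

/-- Variance of the instance density of V in a uniformly random q-ary word of length n. -/
noncomputable def varDensity {Γ : Type*} (V : List Γ) (q n : ℕ) : ℝ :=
  (∑ W : Fin n → Fin q, (instDensity V (List.ofFn W) - expDensity V q n) ^ 2) / (q : ℝ) ^ n

/-- Probability that a uniformly random q-ary word of length n is a V-instance. -/
noncomputable def instProb {Γ : Type*} (V : List Γ) (q n : ℕ) : ℝ :=
  (Nat.card {W : Fin n → Fin q // IsInstance V (List.ofFn W)} : ℝ) / (q : ℝ) ^ n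

/-- V is doubled: every letter occurring in V occurs at least twice. -/
def Doubled {Γ : Type*} [DecidableEq Γ] (V : List Γ) : Prop :=
  ∀ x ∈ V, 2 ≤ V.count x

/-- Number of letter recurrences ‖V‖ = |V| - |L(V)|. -/
def recurCount {Γ : Type*} [DecidableEq Γ] (V : List Γ) : ℕ :=
  V.length - V.dedup.length

namespace Stmt5Aux

def occ (m : ℕ) (W : List (Fin 2)) : ℕ :=
  ((Finset.range (W.length + 1)).filter
    (fun i => i + m ≤ W.length ∧ (W.drop i).take m = List.replicate m (0 : Fin 2))).card

lemma pairs_card (m : ℕ) (hm : 0 < m) (W : List (Fin 2)) :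
    (((Finset.range (W.length + 1)) ×ˢ (Finset.range (W.length + 1))).filter
      (fun p => p.1 < p.2 ∧ (W.drop p.1).take (p.2 - p.1) = List.replicate m (0 : Fin 2))).card
    = occ m W := by
  unfold occ
  apply Finset.card_bij' (fun p _ => p.1) (fun i _ => (i, i + m))
  · rintro ⟨i, j⟩ hp
    simp only [Finset.mem_filter, Finset.mem_product, Finset.mem_range] at hp ⊢
    obtain ⟨⟨hi, hj⟩, hij, heq⟩ := hp
    have hlen := congrArg List.length heq
    simp only [List.length_take, List.length_drop, List.length_replicate] at hlen
    have hjm : j = i + m := by omega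
    subst hjm
    refine ⟨hi, by omega, ?_⟩
    simpa using heq
  · rintro i hi
    simp only [Finset.mem_filter, Finset.mem_product, Finset.mem_range] at hi ⊢
    obtain ⟨hi1, hi2, hi3⟩ := hi
    refine ⟨⟨hi1, by omega⟩, by omega, ?_⟩
    simpa using hi3
  · rintro ⟨i, j⟩ hp
    simp only [Finset.mem_filter, Finset.mem_product, Finset.mem_range] at hp
    obtain ⟨⟨hi, hj⟩, hij, heq⟩ := hp
    have hlen := congrArg List.length heq
    simp only [List.length_take, List.length_drop, List.length_replicate] at hlen
    have : j = i + m := by omega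
    simp [this]
  · intro i hi
    rfl

lemma win_left {B T : List (Fin 2)} {i m : ℕ} (h : i + m ≤ B.length) :
    ((B ++ T).drop i).take m = (B.drop i).take m := by
  rw [List.drop_append_of_le_length (by omega), List.take_append_of_le_length]
  simp; omega

lemma win_right {B T : List (Fin 2)} {i : ℕ} (h : B.length ≤ i) (m : ℕ) :
    ((B ++ T).drop i).take m = (T.drop (i - B.length)).take m := by
  have h2 : i = B.length + (i - B.length) := by omega
  conv_lhs => rw [h2, List.drop_length_add_append]

lemma occ_append (m : ℕ) (hm : 0 < m) (B T : List (Fin 2)) (hB : B ≠ [])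
    (hlast : B.getLast hB = 1) :
    occ m (B ++ T) = occ m B + occ m T := by
  classical
  have hn : 0 < B.length := List.length_pos_iff.mpr hB
  set n := B.length with hndef
  set L := (B ++ T).length with hLdef
  have hLn : L = n + T.length := by simp [hLdef, hndef]
  -- no window crosses the boundary
  have key : ∀ i, i + m ≤ L → ((B ++ T).drop i).take m = List.replicate m (0 : Fin 2) →
      (i + m ≤ n ∨ n ≤ i) := by
    intro i him heq
    by_contra hcon
    push_neg at hcon
    obtain ⟨h1, h2⟩ := hcon
    have hidx : n - 1 - i < (((B ++ T).drop i).take m).length := by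
      simp only [List.length_take, List.length_drop]
      omega
    have hval : (((B ++ T).drop i).take m)[n - 1 - i]? = some (1 : Fin 2) := by
      rw [List.getElem?_eq_getElem hidx, List.getElem_take, List.getElem_drop]
      have hlt : i + (n - 1 - i) < n := by omega
      rw [List.getElem_append_left hlt]
      have heqi : i + (n - 1 - i) = n - 1 := by omega
      simp_rw [heqi]
      rw [← List.getLast_eq_getElem hB, hlast]
    rw [heq] at hval
    have hidx2 : n - 1 - i < m := by
      rw [heq] at hidx; simpa using hidx
    rw [List.getElem?_eq_getElem (by simpa using hidx2)] at hval
    simp only [List.getElem_replicate, Option.some.injEq] at hval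
    exact absurd hval (by decide)
  -- split the filter
  have hsplit :
      (Finset.range (L + 1)).filter
        (fun i => i + m ≤ L ∧ ((B ++ T).drop i).take m = List.replicate m (0 : Fin 2))
      = ((Finset.range (L + 1)).filter
          (fun i => (i + m ≤ L ∧ ((B ++ T).drop i).take m = List.replicate m (0 : Fin 2)) ∧ i + m ≤ n))
        ∪ ((Finset.range (L + 1)).filter
          (fun i => (i + m ≤ L ∧ ((B ++ T).drop i).take m = List.replicate m (0 : Fin 2)) ∧ n ≤ i)) := by
    rw [← Finset.filter_or]
    apply Finset.filter_congr
    intro i _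
    constructor
    · intro h
      rcases key i h.1 h.2 with h' | h'
      · exact Or.inl ⟨h, h'⟩
      · exact Or.inr ⟨h, h'⟩
    · rintro (⟨h, _⟩ | ⟨h, _⟩) <;> exact h
  have hdisj : Disjoint
      ((Finset.range (L + 1)).filter
          (fun i => (i + m ≤ L ∧ ((B ++ T).drop i).take m = List.replicate m (0 : Fin 2)) ∧ i + m ≤ n))
      ((Finset.range (L + 1)).filter
          (fun i => (i + m ≤ L ∧ ((B ++ T).drop i).take m = List.replicate m (0 : Fin 2)) ∧ n ≤ i)) := by
    rw [Finset.disjoint_filter]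
    rintro i _ ⟨_, h1⟩ ⟨_, h2⟩
    omega
  have hcard1 :
      ((Finset.range (L + 1)).filter
        (fun i => (i + m ≤ L ∧ ((B ++ T).drop i).take m = List.replicate m (0 : Fin 2)) ∧ i + m ≤ n)).card
      = occ m B := by
    unfold occ
    congr 1
    apply Finset.ext
    intro i
    simp only [Finset.mem_filter, Finset.mem_range]
    constructor
    · rintro ⟨_, ⟨_, hw⟩, hin⟩
      rw [win_left hin] at hw
      exact ⟨by omega, hin, hw⟩
    · rintro ⟨_, hin, hw⟩
      rw [← win_left (T := T) hin] at hw
      exact ⟨by omega, ⟨by omega, hw⟩, hin⟩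
  have hcard2 :
      ((Finset.range (L + 1)).filter
        (fun i => (i + m ≤ L ∧ ((B ++ T).drop i).take m = List.replicate m (0 : Fin 2)) ∧ n ≤ i)).card
      = occ m T := by
    unfold occ
    apply Finset.card_bij' (fun i _ => i - n) (fun j _ => j + n)
    · intro i hi
      simp only [Finset.mem_filter, Finset.mem_range] at hi ⊢
      obtain ⟨h0, ⟨h1, hw⟩, h2⟩ := hi
      rw [win_right h2] at hw
      exact ⟨by omega, by omega, hw⟩
    · intro j hj
      simp only [Finset.mem_filter, Finset.mem_range] at hj ⊢
      obtain ⟨h0, h1, hw⟩ := hj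
      have h2 : n ≤ j + n := by omega
      have h3 : j + n - n = j := by omega
      rw [← h3] at hw
      rw [← win_right h2 m] at hw
      exact ⟨by omega, ⟨by omega, hw⟩, h2⟩
    · intro i hi
      simp only [Finset.mem_filter, Finset.mem_range] at hi
      omega
    · intro j _
      omega
  rw [occ, hsplit, Finset.card_union_of_disjoint hdisj, hcard1, hcard2]


def blk (r : ℕ) : List (Fin 2) := List.replicate r (0 : Fin 2) ++ [(1 : Fin 2)]

lemma blk_length (r : ℕ) : (blk r).length = r + 1 := by simp [blk]

lemma blk_ne_nil (r : ℕ) : blk r ≠ [] := by simp [blk]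

lemma blk_getLast (r : ℕ) : (blk r).getLast (blk_ne_nil r) = 1 := List.getLast_concat

lemma rep_ne (m : ℕ) (hm : 0 < m) (x : List (Fin 2)) :
    x ++ [(1 : Fin 2)] ≠ List.replicate m (0 : Fin 2) := by
  intro h
  have := congrArg List.getLast? h
  obtain ⟨m', rfl⟩ : ∃ m', m = m' + 1 := ⟨m - 1, by omega⟩
  rw [List.getLast?_concat, List.replicate_succ', List.getLast?_concat] at this
  simp at this

lemma occ_blk (m r : ℕ) (hm : 0 < m) : occ m (blk r) = r + 1 - m := by
  unfold occ
  rw [blk_length]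
  have hset : (Finset.range (r + 1 + 1)).filter
      (fun i => i + m ≤ r + 1 ∧ ((blk r).drop i).take m = List.replicate m (0 : Fin 2))
      = Finset.range (r + 1 - m) := by
    apply Finset.ext
    intro i
    simp only [Finset.mem_filter, Finset.mem_range]
    constructor
    · rintro ⟨h0, h1, hw⟩
      by_contra hcon
      have hi : i + m = r + 1 := by omega
      have hir : i ≤ r := by omega
      have hdrop : (blk r).drop i = List.replicate (r - i) (0 : Fin 2) ++ [(1 : Fin 2)] := by
        rw [blk, List.drop_append_of_le_length (by simpa using hir), List.drop_replicate]
      have htake : (List.replicate (r - i) (0 : Fin 2) ++ [(1 : Fin 2)]).take m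
          = List.replicate (r - i) (0 : Fin 2) ++ [(1 : Fin 2)] := by
        have hlen : m = (List.replicate (r - i) (0 : Fin 2) ++ [(1 : Fin 2)]).length := by
          simp; omega
        rw [hlen, List.take_length]
      rw [hdrop, htake] at hw
      exact rep_ne m hm _ hw
    · intro hi
      have h1 : i + m ≤ r := by omega
      refine ⟨by omega, by omega, ?_⟩
      rw [blk, List.drop_append_of_le_length (by simp; omega), List.drop_replicate,
        List.take_append_of_le_length (by simp; omega), List.take_replicate]
      congr 1
      omega
  rw [hset, Finset.card_range]

lemma occ_rep1 (m t : ℕ) (hm : 0 < m) : occ m (List.replicate t (1 : Fin 2)) = 0 := by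
  unfold occ
  rw [Finset.card_eq_zero, Finset.filter_eq_empty_iff]
  intro i _
  rintro ⟨h1, hw⟩
  rw [List.length_replicate] at h1
  rw [List.drop_replicate, List.take_replicate] at hw
  have hmin : min m (t - i) = m := by omega
  rw [hmin] at hw
  obtain ⟨m', rfl⟩ : ∃ m', m = m' + 1 := ⟨m - 1, by omega⟩
  simp [List.replicate_succ] at hw

def Wd (r s t : ℕ) : List (Fin 2) :=
  (List.replicate s (blk r)).flatten ++ List.replicate t (1 : Fin 2)

lemma Wd_succ (r s t : ℕ) : Wd r (s + 1) t = blk r ++ Wd r s t := by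
  simp [Wd, List.replicate_succ, List.flatten_cons, List.append_assoc]

lemma Wd_length (r s t : ℕ) : (Wd r s t).length = s * (r + 1) + t := by
  induction s with
  | zero => simp [Wd]
  | succ s ih =>
    rw [Wd_succ, List.length_append, ih, blk_length]
    ring

lemma occ_Wd (m r s t : ℕ) (hm : 0 < m) : occ m (Wd r s t) = s * (r + 1 - m) := by
  induction s with
  | zero => simpa [Wd] using occ_rep1 m t hm
  | succ s ih =>
    rw [Wd_succ, occ_append m hm _ _ (blk_ne_nil r) (blk_getLast r), ih, occ_blk m r hm]
    ring

end Stmt5Aux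

theorem stmt5 (k ℓ : ℕ) (hk : 0 < k) (hkl : k < ℓ) (d : ℚ) (hd0 : 0 ≤ d)
    (hd1 : d ≤ ((ℓ : ℚ) - k) / ℓ) (N : ℕ) :
    ∃ W : List (Fin 2), N ≤ W.length ∧
      factorDensity (List.replicate k (0 : Fin 2)) W = (d : ℝ) ∧
      factorDensity (List.replicate ℓ (0 : Fin 2)) W = 0 := by
  classical
  have hℓ0 : 0 < ℓ := hk.trans hkl
  set p := d.num.toNat with hpdef
  set q := d.den with hqdef
  have hq0 : 0 < q := d.pos
  have hnum : (p : ℤ) = d.num := Int.toNat_of_nonneg (Rat.num_nonneg.mpr hd0)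
  -- key inequality p*ℓ ≤ q*(ℓ-k)
  have hpq : p * ℓ ≤ q * (ℓ - k) := by
    have hℓQ : (0 : ℚ) < ℓ := by exact_mod_cast hℓ0
    have h1 : d * ℓ ≤ (ℓ : ℚ) - k := (le_div_iff₀ hℓQ).mp hd1
    have h2 : (p : ℚ) = d * q := by
      rw [Rat.mul_den_eq_num d, ← hnum]
      push_cast
      ring
    have h3 : (p : ℚ) * ℓ ≤ (q : ℚ) * ((ℓ : ℚ) - k) := by
      calc (p : ℚ) * ℓ = (d * ℓ) * q := by rw [h2]; ring
        _ ≤ ((ℓ : ℚ) - k) * q := by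
            apply mul_le_mul_of_nonneg_right h1 (by positivity)
        _ = (q : ℚ) * ((ℓ : ℚ) - k) := by ring
    have h4 : ((p * ℓ : ℕ) : ℚ) ≤ ((q * (ℓ - k) : ℕ) : ℚ) := by
      push_cast [Nat.cast_sub hkl.le]
      linarith
    exact_mod_cast h4
  set M := N + 1 with hMdef
  set A := q * (ℓ - k) - p * ℓ with hAdef
  set s := p * M with hsdef
  set t := A * M + (k - 1) with htdef
  have hr : ℓ - 1 + 1 = ℓ := by omega
  have hWlen : (Stmt5Aux.Wd (ℓ - 1) s t).length = s * ℓ + t := by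
    rw [Stmt5Aux.Wd_length, hr]
  have hsub : A * M = q * (ℓ - k) * M - p * ℓ * M := by rw [hAdef, Nat.sub_mul]
  have hle : p * ℓ * M ≤ q * (ℓ - k) * M := Nat.mul_le_mul_right M hpq
  have hsl : s * ℓ = p * ℓ * M := by rw [hsdef]; ring
  have hkey : s * ℓ + t + 1 = q * (ℓ - k) * M + k := by
    rw [hsl, htdef, hsub]
    generalize hX : p * ℓ * M = X at hle ⊢
    generalize hY : q * (ℓ - k) * M = Y at hle ⊢
    omega
  have hMle : M ≤ q * (ℓ - k) * M :=
    Nat.le_mul_of_pos_left M (Nat.mul_pos hq0 (by omega))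
  refine ⟨Stmt5Aux.Wd (ℓ - 1) s t, ?_, ?_, ?_⟩
  · rw [hWlen]
    generalize hX : s * ℓ = X at hkey
    generalize hY : q * (ℓ - k) * M = Y at hkey hMle
    omega
  · unfold factorDensity
    rw [Stmt5Aux.pairs_card k hk _, Stmt5Aux.occ_Wd k (ℓ - 1) s t hk]
    have ho : ℓ - 1 + 1 - k = ℓ - k := by omega
    rw [ho]
    simp only [List.length_replicate]
    have h5 : (Stmt5Aux.Wd (ℓ - 1) s t).length + 1 = q * (ℓ - k) * M + k := by
      rw [hWlen]; exact hkey
    have hden : ((Stmt5Aux.Wd (ℓ - 1) s t).length : ℝ) + 1 - k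
        = ((q * (ℓ - k) * M : ℕ) : ℝ) := by
      have h6 : (((Stmt5Aux.Wd (ℓ - 1) s t).length + 1 : ℕ) : ℝ)
          = ((q * (ℓ - k) * M + k : ℕ) : ℝ) := by exact_mod_cast h5
      push_cast at h6 ⊢
      linarith
    rw [hden, hsdef]
    rw [Rat.cast_def, ← hnum]
    have hx : (0 : ℝ) < (ℓ : ℝ) - (k : ℝ) := by
      have : (k : ℝ) < (ℓ : ℝ) := by exact_mod_cast hkl
      linarith
    have hqR : (0 : ℝ) < (q : ℝ) := by exact_mod_cast hq0
    have hMR : (0 : ℝ) < (M : ℝ) := by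
      have : 0 < M := by omega
      exact_mod_cast this
    push_cast [Nat.cast_sub hkl.le]
    rw [div_eq_div_iff (by positivity) (ne_of_gt hqR)]
    ring
  · unfold factorDensity
    rw [Stmt5Aux.pairs_card ℓ hℓ0 _, Stmt5Aux.occ_Wd ℓ (ℓ - 1) s t hℓ0]
    have ho : ℓ - 1 + 1 - ℓ = 0 := by omega
    rw [ho]
    simp
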